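/- Let f : X → X be a homeomorphism of a compact metric space. If f is (m,n)-expansive for some integers m > n ≥ 1, then f is continuum-wise expansive. -/

import Mathlib

variable {X : Type*} [MetricSpace X]

/-- The `k`-th iterate (`k ∈ ℤ`) of a homeomorphism, as a function. -/
noncomputable def hiter (f : X ≃ₜ X) (k : ℤ) : X → X := ⇑(f.toEquiv ^ k)

/-- A set is `δ`-separated if distinct points are at distance `> δ`. -/
def IsSeparated' (δ : ℝ) (B : Set X) : Prop :=
  ∀ x ∈ B, ∀ y ∈ B, x ≠ y → δ < dist x y

/-- The `δ`-cardinality of a set: sup of cardinalities of `δ`-separated subsets. -/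
noncomputable def dCard (δ : ℝ) (A : Set X) : ℕ∞ :=
  ⨆ B ∈ {B : Set X | B ⊆ A ∧ IsSeparated' δ B}, B.encard

/-- `(m,n)`-expansiveness with a given expansive constant `δ`. -/
def MNExpansiveWith (f : X ≃ₜ X) (m n : ℕ) (δ : ℝ) : Prop :=
  ∀ A : Set X, A.encard = m → ∃ k : ℤ, (n : ℕ∞) < dCard δ (hiter f k '' A)

/-- `(m,n)`-expansiveness. -/
def MNExpansive (f : X ≃ₜ X) (m n : ℕ) : Prop :=
  ∃ δ > 0, MNExpansiveWith f m n δ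

/-- Continuum-wise expansiveness. -/
def CWExpansive (f : X ≃ₜ X) : Prop :=
  ∃ δ > 0, ∀ A : Set X, IsCompact A → IsConnected A →
    (∀ k : ℤ, Metric.diam (hiter f k '' A) < δ) → ∃ x, A = {x}

lemma hiter_continuous (f : X ≃ₜ X) (k : ℤ) : Continuous (hiter f k) := by
  induction k using Int.induction_on with
  | zero => simpa [hiter] using continuous_id
  | succ i ih =>
      have : hiter f (i + 1) = hiter f i ∘ ⇑f := by
        ext x
        simp [hiter, zpow_add_one]
      rw [this]; exact ih.comp f.continuous
  | pred i ih =>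
      have : hiter f (-i - 1) = hiter f (-i) ∘ ⇑f.symm := by
        ext x
        simp [hiter, zpow_sub_one]
      rw [this]; exact ih.comp f.symm.continuous

theorem stmt12 [CompactSpace X] (f : X ≃ₜ X) (m n : ℕ) (h1 : 1 ≤ n) (h2 : n < m)
    (hf : MNExpansive f m n) : CWExpansive f := by
  obtain ⟨δ, hδ, hmn⟩ := hf
  refine ⟨δ, hδ, fun A hcomp hconn hdiam => ?_⟩
  by_contra hsing
  have hnt : A.Nontrivial := by
    by_contra h
    rcases hconn.nonempty with ⟨x, hx⟩
    exact hsing ⟨x, (Set.not_nontrivial_iff.mp h).eq_singleton_of_mem hx⟩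
  have hinf : A.Infinite := hconn.isPreconnected.infinite_of_nontrivial hnt
  obtain ⟨S, hSA, hScard⟩ := Set.exists_subset_encard_eq
    (show (m : ℕ∞) ≤ A.encard by rw [hinf.encard_eq]; exact le_top)
  obtain ⟨k, hk⟩ := hmn S hScard
  have hb : Bornology.IsBounded (hiter f k '' A) :=
    (hcomp.image (hiter_continuous f k)).isBounded
  have hle : dCard δ (hiter f k '' S) ≤ 1 := by
    refine iSup₂_le fun B hB => ?_
    rw [Set.encard_le_one_iff]
    intro x y hx hy
    by_contra hne
    have hsep := hB.2 x hx y hy hne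
    have hxA : x ∈ hiter f k '' A := Set.image_mono hSA (hB.1 hx)
    have hyA : y ∈ hiter f k '' A := Set.image_mono hSA (hB.1 hy)
    have := Metric.dist_le_diam_of_mem hb hxA hyA
    linarith [hdiam k]
  have : (n : ℕ∞) < 1 := hk.trans_le hle
  have : n < 1 := by exact_mod_cast this
  omega
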